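/- Strong Nullstellensatz for differencly closed fields: let K be a differencly closed difference field. Then for every perfect difference ideal 𝔱 ⊆ K{y₁,…,yₙ}, one has 𝔱 = I(V(𝔱)), where V(𝔱) ⊆ Kⁿ is the set of common zeros of 𝔱 and I(X) is the difference ideal of polynomials vanishing on X. -/

import Mathlib

open MvPolynomial

universe u v

variable {G : Type u} [Group G]

noncomputable def diffAct {A : Type v} [CommRing A] [MulSemiringAction G A] {n : ℕ} (σ : G) :
    MvPolynomial (G × Fin n) A →+* MvPolynomial (G × Fin n) A :=
  (MvPolynomial.rename (Prod.map (fun τ => σ * τ) id)).toRingHom.comp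
    (MvPolynomial.map (MulSemiringAction.toRingHom G A σ))

def IsDiffIdeal {A : Type v} [CommRing A] [MulSemiringAction G A] {n : ℕ}
    (I : Ideal (MvPolynomial (G × Fin n) A)) : Prop :=
  ∀ σ : G, ∀ f ∈ I, diffAct σ f ∈ I

def IsPerfectDiffIdeal {A : Type v} [CommRing A] [MulSemiringAction G A] {n : ℕ}
    (I : Ideal (MvPolynomial (G × Fin n) A)) : Prop :=
  IsDiffIdeal I ∧
    ∀ (f : MvPolynomial (G × Fin n) A) (m : ℕ) (σ : Fin m → G) (k : Fin m → ℕ),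
      (∀ i, 1 ≤ k i) → (∏ i, (diffAct (σ i) f) ^ k i) ∈ I → f ∈ I

def IsStableIdeal (G : Type u) [Group G] {R : Type v} [CommRing R] [MulSemiringAction G R] (I : Ideal R) : Prop :=
  ∀ σ : G, ∀ a ∈ I, σ • a ∈ I

def IsPerfectIdeal (G : Type u) [Group G] {R : Type v} [CommRing R] [MulSemiringAction G R] (I : Ideal R) : Prop :=
  IsStableIdeal G I ∧
    ∀ (a : R) (m : ℕ) (σ : Fin m → G) (k : Fin m → ℕ),
      (∀ i, 1 ≤ k i) → (∏ i, (σ i • a) ^ k i) ∈ I → a ∈ I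

def IsSimpleDiffRing (G : Type u) (R : Type v) [Group G] [CommRing R] [MulSemiringAction G R] : Prop :=
  Nontrivial R ∧ ∀ I : Ideal R, IsStableIdeal G I → I = ⊥ ∨ I = ⊤

def IsPseudofield (G : Type u) (R : Type v) [Group G] [CommRing R] [MulSemiringAction G R] : Prop :=
  IsSimpleDiffRing G R ∧ ∀ a : R, ∃ x : R, a * x * a = a

structure DiffRingExt (G : Type u) [Group G] : Type (max u (v + 1)) where
  carrier : Type v
  [ring : CommRing carrier]
  [act : MulSemiringAction G carrier]

attribute [instance] DiffRingExt.ring DiffRingExt.act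

section Aux

variable {A : Type v} [CommRing A] [MulSemiringAction G A] {n : ℕ}

lemma diffAct_C (σ : G) (a : A) : diffAct (n := n) σ (C a) = C (σ • a) := by
  simp [diffAct, MulSemiringAction.toRingHom]
  rfl

lemma diffAct_X (σ : G) (p : G × Fin n) :
    diffAct (A := A) σ (X p) = X (σ * p.1, p.2) := by
  simp [diffAct, Prod.map]

lemma diffAct_diffAct (σ τ : G) (p : MvPolynomial (G × Fin n) A) :
    diffAct σ (diffAct τ p) = diffAct (σ * τ) p := by
  induction p using MvPolynomial.induction_on with
  | C a => rw [diffAct_C, diffAct_C, diffAct_C, mul_smul]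
  | add p q hp hq => rw [map_add, map_add, map_add, hp, hq]
  | mul_X p i hp => rw [map_mul, map_mul, map_mul, hp, diffAct_X, diffAct_X, diffAct_X, mul_assoc]

lemma diffAct_one (p : MvPolynomial (G × Fin n) A) : diffAct (1 : G) p = p := by
  induction p using MvPolynomial.induction_on with
  | C a => rw [diffAct_C, one_smul]
  | add p q hp hq => rw [map_add, hp, hq]
  | mul_X p i hp => rw [map_mul, hp, diffAct_X, one_mul]

lemma diffAct_injective (σ : G) :
    Function.Injective (diffAct σ : MvPolynomial (G × Fin n) A →+* _) := by
  intro p q h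
  have h2 := congrArg (diffAct σ⁻¹) h
  rwa [diffAct_diffAct, diffAct_diffAct, inv_mul_cancel, diffAct_one, diffAct_one] at h2

/-- The multiplicative set generated by the `G`-translates of `f`. -/
noncomputable def transSet (f : MvPolynomial (G × Fin n) A) : Submonoid (MvPolynomial (G × Fin n) A) :=
  Submonoid.closure (Set.range fun σ : G => diffAct σ f)

lemma mem_transSet_iff {f u : MvPolynomial (G × Fin n) A} :
    u ∈ transSet f ↔ ∃ (m : ℕ) (τ : Fin m → G), u = ∏ i, diffAct (τ i) f := by
  constructor
  · intro hu
    induction hu using Submonoid.closure_induction with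
    | mem x hx => obtain ⟨σ, rfl⟩ := hx; exact ⟨1, fun _ => σ, by simp⟩
    | one => exact ⟨0, Fin.elim0, by simp⟩
    | mul x y hx hy ihx ihy =>
      obtain ⟨m₁, τ₁, rfl⟩ := ihx
      obtain ⟨m₂, τ₂, rfl⟩ := ihy
      refine ⟨m₁ + m₂, Fin.append τ₁ τ₂, ?_⟩
      rw [Fin.prod_univ_add]
      simp [Fin.append_left, Fin.append_right]
  · rintro ⟨m, τ, rfl⟩
    exact Submonoid.prod_mem _ fun i _ => Submonoid.subset_closure ⟨τ i, rfl⟩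

lemma transSet_self_mem (f : MvPolynomial (G × Fin n) A) (σ : G) :
    diffAct σ f ∈ transSet f :=
  Submonoid.subset_closure ⟨σ, rfl⟩

lemma transSet_stable {f : MvPolynomial (G × Fin n) A} (σ : G) {u}
    (hu : u ∈ transSet f) : diffAct σ u ∈ transSet f := by
  rw [mem_transSet_iff] at hu ⊢
  obtain ⟨m, τ, rfl⟩ := hu
  exact ⟨m, fun i => σ * τ i, by rw [map_prod]; simp [diffAct_diffAct]⟩

lemma transSet_ne_zero [IsDomain A] {f : MvPolynomial (G × Fin n) A} (hf : f ≠ 0)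
    {u} (hu : u ∈ transSet f) : u ≠ 0 := by
  rw [mem_transSet_iff] at hu
  obtain ⟨m, τ, rfl⟩ := hu
  refine Finset.prod_ne_zero_iff.mpr fun i _ => fun h => hf ?_
  have h0 : diffAct (τ i) (0 : MvPolynomial (G × Fin n) A) = 0 := map_zero _
  exact diffAct_injective (τ i) (h.trans h0.symm)

/-- Key lemma: if a perfect difference ideal contains `u * ∏ σᵢ(a)^kᵢ` with `u` in the
multiplicative set of translates of `f`, then it contains `s * a` for some `s` in that set. -/
lemma perfect_key {𝔱 : Ideal (MvPolynomial (G × Fin n) A)}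
    (h𝔱 : IsPerfectDiffIdeal 𝔱) (f a : MvPolynomial (G × Fin n) A) {m : ℕ} (i₀ : Fin m)
    (σ : Fin m → G) (k : Fin m → ℕ) (hk : ∀ i, 1 ≤ k i) {u} (hu : u ∈ transSet f)
    (h : u * ∏ i, diffAct (σ i) a ^ k i ∈ 𝔱) : ∃ s ∈ transSet f, s * a ∈ 𝔱 := by
  set t := diffAct (σ i₀)⁻¹ u with ht_def
  have ht : t ∈ transSet f := transSet_stable _ hu
  have h2 : diffAct (σ i₀) t = u := by
    rw [ht_def, diffAct_diffAct, mul_inv_cancel, diffAct_one]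
  refine ⟨t, ht, h𝔱.2 (t * a) m σ k hk ?_⟩
  have key_eq : ∏ i, diffAct (σ i) (t * a) ^ k i
      = (u * ∏ i, diffAct (σ i) a ^ k i) *
        (u ^ (k i₀ - 1) * ∏ i ∈ Finset.univ.erase i₀, diffAct (σ i) t ^ k i) := by
    simp only [map_mul, mul_pow, Finset.prod_mul_distrib]
    rw [← Finset.mul_prod_erase _ (fun i => diffAct (σ i) t ^ k i) (Finset.mem_univ i₀), h2]
    have hu1 : u ^ k i₀ = u * u ^ (k i₀ - 1) := by
      obtain ⟨e, he⟩ := Nat.exists_eq_add_of_le (hk i₀)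
      rw [he]
      have h3 : 1 + e - 1 = e := by omega
      rw [h3, pow_add, pow_one]
    rw [hu1]; ring
  rw [key_eq]
  exact Ideal.mul_mem_right _ _ h

end Aux

set_option maxHeartbeats 1000000 in
/-- Strong Nullstellensatz for a differencly closed field: every perfect difference
ideal `𝔱 ⊆ K{y₁,…,yₙ}` satisfies `𝔱 = I(V(𝔱))`. -/
theorem stmt12 {G K : Type u} [Group G] [Field K] [MulSemiringAction G K]
    (hclosed : ∀ (m : ℕ) (𝔞 : Ideal (MvPolynomial (G × Fin m) K)),
      IsPerfectDiffIdeal 𝔞 → 𝔞 ≠ ⊤ →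
        ∃ x : Fin m → K, ∀ f ∈ 𝔞, aeval (fun p : G × Fin m => p.1 • x p.2) f = 0)
    (n : ℕ) (𝔱 : Ideal (MvPolynomial (G × Fin n) K)) (h𝔱 : IsPerfectDiffIdeal 𝔱) :
    ∀ f : MvPolynomial (G × Fin n) K,
      f ∈ 𝔱 ↔ ∀ x : Fin n → K,
        (∀ g ∈ 𝔱, aeval (fun p : G × Fin n => p.1 • x p.2) g = 0) →
        aeval (fun p : G × Fin n => p.1 • x p.2) f = 0 := by
  intro f
  constructor
  · intro hf x hx
    exact hx f hf
  intro H
  by_contra hf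
  -- basic facts
  have hf0 : f ≠ 0 := fun h => hf (h ▸ 𝔱.zero_mem)
  set S : Submonoid (MvPolynomial (G × Fin n) K) := transSet f with hS_def
  -- elements of S are not in 𝔱
  have hdisj : ∀ u ∈ S, u ∉ 𝔱 := by
    intro u hu hu𝔱
    rw [hS_def, mem_transSet_iff] at hu
    obtain ⟨m, τ, rfl⟩ := hu
    rcases Nat.eq_zero_or_pos m with hm | hm
    · subst hm
      rw [Finset.univ_eq_empty, Finset.prod_empty] at hu𝔱
      exact hf (((Ideal.eq_top_iff_one 𝔱).mpr hu𝔱) ▸ Submodule.mem_top)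
    · refine hf (h𝔱.2 f m τ (fun _ => 1) (fun _ => le_refl 1) ?_)
      simpa using hu𝔱
  have hSnz : S ≤ nonZeroDivisors (MvPolynomial (G × Fin n) K) := fun u hu =>
    mem_nonZeroDivisors_of_ne_zero (transSet_ne_zero hf0 hu)
  -- the localization
  let Loc := Localization S
  have hinj : Function.Injective (algebraMap (MvPolynomial (G × Fin n) K) Loc) :=
    IsLocalization.injective Loc hSnz
  -- the evaluation map φ : K{y₁,…,yₙ₊₁} → Loc
  let base : K →+* Loc := (algebraMap (MvPolynomial (G × Fin n) K) Loc).comp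
    (C : K →+* MvPolynomial (G × Fin n) K)
  let v : G × Fin (n+1) → Loc := fun p =>
    if h : (p.2 : ℕ) < n then algebraMap (MvPolynomial (G × Fin n) K) Loc (X (p.1, ⟨p.2, h⟩))
    else IsLocalization.mk' Loc 1 (⟨diffAct p.1 f, transSet_self_mem f p.1⟩ : S)
  let φ : MvPolynomial (G × Fin (n+1)) K →+* Loc := eval₂Hom base v
  have hφC : ∀ a : K, φ (C a) = algebraMap (MvPolynomial (G × Fin n) K) Loc (C a) := fun a =>
    (eval₂Hom_C base v a).trans (RingHom.comp_apply _ _ a)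
  have hφX : ∀ p : G × Fin (n+1), φ (X p) = v p := fun p => eval₂Hom_X' base v p
  have hvpos : ∀ (τ : G) (i : Fin (n+1)) (h : (i : ℕ) < n),
      v (τ, i) = algebraMap (MvPolynomial (G × Fin n) K) Loc
        (X (τ, (⟨(i : ℕ), h⟩ : Fin n))) := fun τ i h => dif_pos h
  have hvneg : ∀ (τ : G) (i : Fin (n+1)), ¬ (i : ℕ) < n →
      v (τ, i) = IsLocalization.mk' Loc 1 (⟨diffAct τ f, transSet_self_mem f τ⟩ : S) :=
    fun τ i h => dif_neg h
  -- the lifted action on Loc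
  have hunit : ∀ σ : G, ∀ s : S,
      IsUnit (((algebraMap (MvPolynomial (G × Fin n) K) Loc).comp (diffAct σ)) s) := by
    intro σ s
    exact IsLocalization.map_units Loc (⟨diffAct σ s, transSet_stable σ s.2⟩ : S)
  let ℓ : G → Loc →+* Loc := fun σ => IsLocalization.lift (hunit σ)
  have hl_alg : ∀ (σ : G) (r : MvPolynomial (G × Fin n) K),
      ℓ σ (algebraMap _ Loc r) = algebraMap _ Loc (diffAct σ r) := fun σ r =>
    IsLocalization.lift_eq (hunit σ) r
  -- cancel helper
  have cancel : ∀ {a b c : Loc}, a * c = 1 → b * c = 1 → a = b := by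
    intro a b c h1 h2
    calc a = a * (b * c) := by rw [h2, mul_one]
    _ = b * (a * c) := by ring
    _ = b := by rw [h1, mul_one]
  have hl_mk : ∀ (σ : G) (s : S), ℓ σ (IsLocalization.mk' Loc 1 s)
      = IsLocalization.mk' Loc 1 (⟨diffAct σ s, transSet_stable σ s.2⟩ : S) := by
    intro σ s
    have h1 : IsLocalization.mk' Loc 1 s * algebraMap _ Loc (s : MvPolynomial (G × Fin n) K)
        = 1 := by
      rw [IsLocalization.mk'_spec, map_one]
    have h2 := congrArg (ℓ σ) h1
    rw [map_mul, map_one, hl_alg] at h2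
    have h3 : IsLocalization.mk' Loc 1 (⟨diffAct σ s, transSet_stable σ s.2⟩ : S) *
        algebraMap _ Loc (diffAct σ (s : MvPolynomial (G × Fin n) K)) = 1 := by
      rw [IsLocalization.mk'_spec, map_one]
    exact cancel h2 h3
  -- φ intertwines diffAct with ℓ
  have hφdiff : ∀ (σ : G) (p : MvPolynomial (G × Fin (n+1)) K),
      φ (diffAct σ p) = ℓ σ (φ p) := by
    intro σ p
    induction p using MvPolynomial.induction_on with
    | C a =>
      rw [diffAct_C, hφC, hφC, hl_alg, diffAct_C]
    | add p q hp hq => rw [map_add, map_add, map_add, map_add, hp, hq]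
    | mul_X p i hp =>
      obtain ⟨τ, j⟩ := i
      rw [map_mul, map_mul, map_mul, map_mul, hp, diffAct_X, hφX, hφX]
      congr 1
      by_cases h : (j : ℕ) < n
      · rw [hvpos τ j h, hvpos (σ * τ) j h, hl_alg, diffAct_X]
      · rw [hvneg τ j h, hvneg (σ * τ) j h, hl_mk]
        congr 1
        exact Subtype.ext (diffAct_diffAct σ τ f).symm
  -- the ideal in the localization and its pullback
  set I' : Ideal Loc := Ideal.map (algebraMap (MvPolynomial (G × Fin n) K) Loc) 𝔱 with hI'_def
  have hmemI' : ∀ z : Loc, z ∈ I' ↔ ∃ x : 𝔱 × S,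
      z * algebraMap _ Loc (x.2 : MvPolynomial (G × Fin n) K)
        = algebraMap _ Loc (x.1 : MvPolynomial (G × Fin n) K) := fun z =>
    IsLocalization.mem_map_algebraMap_iff S Loc
  have hone : (1 : Loc) ∉ I' := by
    intro h1
    obtain ⟨⟨⟨t, ht⟩, ⟨s, hs⟩⟩, heq⟩ := (hmemI' 1).mp h1
    rw [one_mul] at heq
    have h2 : s = t := hinj heq
    exact hdisj s hs (h2 ▸ ht)
  have hlI' : ∀ (σ : G), ∀ z ∈ I', ℓ σ z ∈ I' := by
    intro σ z hz
    obtain ⟨⟨⟨t, ht⟩, ⟨s, hs⟩⟩, heq⟩ := (hmemI' z).mp hz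
    have h2 := congrArg (ℓ σ) heq
    rw [map_mul, hl_alg, hl_alg] at h2
    exact (hmemI' _).mpr ⟨⟨⟨diffAct σ t, h𝔱.1 σ t ht⟩, ⟨diffAct σ s, transSet_stable σ hs⟩⟩, h2⟩
  set 𝔮 : Ideal (MvPolynomial (G × Fin (n+1)) K) := I'.comap φ with h𝔮_def
  have h𝔮mem : ∀ p, p ∈ 𝔮 ↔ φ p ∈ I' := fun p => Iff.rfl
  -- 𝔮 is proper
  have h𝔮top : 𝔮 ≠ ⊤ := by
    intro h
    have : (1 : MvPolynomial (G × Fin (n+1)) K) ∈ 𝔮 := h ▸ Submodule.mem_top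
    rw [h𝔮mem, map_one] at this
    exact hone this
  -- 𝔮 is a difference ideal
  have h𝔮diff : IsDiffIdeal 𝔮 := by
    intro σ p hp
    rw [h𝔮mem, hφdiff]
    exact hlI' σ _ hp
  -- 𝔮 is perfect
  have h𝔮perf : ∀ (g : MvPolynomial (G × Fin (n+1)) K) (m : ℕ) (σ : Fin m → G) (k : Fin m → ℕ),
      (∀ i, 1 ≤ k i) → (∏ i, (diffAct (σ i) g) ^ k i) ∈ 𝔮 → g ∈ 𝔮 := by
    intro g m σ k hk hprod
    rcases Nat.eq_zero_or_pos m with hm | hm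
    · exfalso
      subst hm
      rw [Finset.univ_eq_empty, Finset.prod_empty, h𝔮mem, map_one] at hprod
      exact hone hprod
    obtain ⟨⟨a, s⟩, hsurj⟩ := IsLocalization.surj (M := S) (S := Loc) (φ g)
    have hi : ∀ i, φ (diffAct (σ i) g) *
        algebraMap (MvPolynomial (G × Fin n) K) Loc (diffAct (σ i) (s : MvPolynomial (G × Fin n) K))
        = algebraMap (MvPolynomial (G × Fin n) K) Loc (diffAct (σ i) a) := by
      intro i
      have h2 := congrArg (ℓ (σ i)) hsurj
      rw [map_mul, hl_alg, hl_alg, ← hφdiff] at h2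
      exact h2
    have hbig : φ (∏ i, diffAct (σ i) g ^ k i) *
        algebraMap (MvPolynomial (G × Fin n) K) Loc
          (∏ i, diffAct (σ i) (s : MvPolynomial (G × Fin n) K) ^ k i)
        = algebraMap (MvPolynomial (G × Fin n) K) Loc (∏ i, diffAct (σ i) a ^ k i) := by
      rw [map_prod, map_prod, map_prod, ← Finset.prod_mul_distrib]
      refine Finset.prod_congr rfl fun i _ => ?_
      rw [map_pow, map_pow, map_pow, ← mul_pow, hi i]
    have hmem2 : algebraMap _ Loc (∏ i, diffAct (σ i) a ^ k i) ∈ I' :=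
      hbig ▸ Ideal.mul_mem_right _ _ hprod
    obtain ⟨⟨⟨t, ht⟩, ⟨u, hu⟩⟩, heq⟩ := (hmemI' _).mp hmem2
    have h5 : u * ∏ i, diffAct (σ i) a ^ k i ∈ 𝔱 := by
      rw [← map_mul] at heq
      rw [mul_comm]
      exact (hinj heq) ▸ ht
    obtain ⟨s', hs'S, hs'⟩ := perfect_key h𝔱 f a ⟨0, hm⟩ σ k hk hu h5
    have haI : algebraMap _ Loc a ∈ I' :=
      (hmemI' _).mpr ⟨⟨⟨s' * a, hs'⟩, ⟨s', hs'S⟩⟩, by rw [← map_mul, mul_comm]⟩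
    have h6 : φ g * algebraMap _ Loc (s : MvPolynomial (G × Fin n) K) ∈ I' := hsurj ▸ haI
    obtain ⟨w, hw⟩ := IsLocalization.map_units Loc s
    rw [h𝔮mem]
    have h7 : φ g = (φ g * algebraMap _ Loc (s : MvPolynomial (G × Fin n) K)) * ↑w⁻¹ := by
      rw [← hw, mul_assoc, Units.mul_inv, mul_one]
    rw [h7]
    exact Ideal.mul_mem_right _ _ h6
  -- the embedding of the n-variable ring
  have hφι : ∀ r : MvPolynomial (G × Fin n) K,
      φ (rename (Prod.map id Fin.castSucc) r) = algebraMap _ Loc r := by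
    intro r
    induction r using MvPolynomial.induction_on with
    | C a => rw [rename_C, hφC]
    | add p q hp hq => rw [map_add, map_add, map_add, hp, hq]
    | mul_X p i hp =>
      obtain ⟨τ, j⟩ := i
      have hr : rename (Prod.map id Fin.castSucc) (p * X ((τ, j) : G × Fin n))
          = rename (Prod.map id Fin.castSucc) p * X (τ, Fin.castSucc j) := by
        rw [map_mul, rename_X]
        rfl
      rw [hr]
      have hlt : ((Fin.castSucc j : Fin (n+1)) : ℕ) < n := by
        simpa [Fin.coe_castSucc] using j.isLt
      have hXeq : (X ((τ, (⟨((Fin.castSucc j : Fin (n+1)) : ℕ), hlt⟩ : Fin n)) : G × Fin n) :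
          MvPolynomial (G × Fin n) K) = X (τ, j) :=
        congrArg X (Prod.ext rfl (Fin.ext (by simp [Fin.coe_castSucc])))
      calc φ (rename (Prod.map id Fin.castSucc) p * X (τ, Fin.castSucc j))
          = φ (rename (Prod.map id Fin.castSucc) p) * φ (X (τ, Fin.castSucc j)) :=
            map_mul φ _ _
        _ = algebraMap (MvPolynomial (G × Fin n) K) Loc p *
            algebraMap (MvPolynomial (G × Fin n) K) Loc (X (τ, j)) := by
            rw [hp, hφX, hvpos τ (Fin.castSucc j) hlt, hXeq]
        _ = algebraMap (MvPolynomial (G × Fin n) K) Loc (p * X (τ, j)) :=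
            (map_mul _ _ _).symm
  have hmem𝔱 : ∀ g ∈ 𝔱, rename (Prod.map id Fin.castSucc) g ∈ 𝔮 := by
    intro g hg
    rw [h𝔮mem, hφι]
    exact Ideal.mem_map_of_mem _ hg
  -- the Rabinowitsch element
  set r₀ : MvPolynomial (G × Fin (n+1)) K :=
    X ((1 : G), Fin.last n) * rename (Prod.map id Fin.castSucc) f - 1 with hr₀_def
  have hr₀ : r₀ ∈ 𝔮 := by
    rw [h𝔮mem, hr₀_def, map_sub, map_mul, map_one, hφι]
    rw [hφX, hvneg (1 : G) (Fin.last n) (by simp)]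
    have hsub : (⟨diffAct (1 : G) f, transSet_self_mem f 1⟩ : S)
        = ⟨f, by simpa [diffAct_one] using transSet_self_mem f 1⟩ :=
      Subtype.ext (diffAct_one f)
    rw [hsub]
    have : IsLocalization.mk' Loc 1
        (⟨f, by simpa [diffAct_one] using transSet_self_mem f 1⟩ : S) *
        algebraMap _ Loc f = 1 := by
      rw [IsLocalization.mk'_spec, map_one]
    rw [this, sub_self]
    exact I'.zero_mem
  -- get a common zero
  obtain ⟨x', hx'⟩ := hclosed (n+1) 𝔮 ⟨h𝔮diff, h𝔮perf⟩ h𝔮top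
  set x : Fin n → K := fun i => x' (Fin.castSucc i) with hx_def
  have hzero : ∀ g ∈ 𝔱, aeval (fun p : G × Fin n => p.1 • x p.2) g = 0 := by
    intro g hg
    have h8 := hx' _ (hmem𝔱 g hg)
    rwa [aeval_rename] at h8
  have hfx : aeval (fun p : G × Fin n => p.1 • x p.2) f = 0 := H x hzero
  have h9 := hx' _ hr₀
  rw [hr₀_def, map_sub, map_mul, map_one, aeval_rename, aeval_X] at h9
  have h10 : (aeval ((fun p : G × Fin (n+1) => p.1 • x' p.2) ∘ Prod.map id Fin.castSucc)) f
      = aeval (fun p : G × Fin n => p.1 • x p.2) f := rfl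
  rw [h10, hfx, mul_zero, zero_sub, neg_eq_zero] at h9
  exact one_ne_zero h9
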